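/- Define operators Ψ^{m,n}(z) built from l pairs of free fermion fields as Ψ^{m,n} = Σ_k (:∂^m ψ^{+,k} ∂^n ψ^{-,k}: + :∂^m ψ^{-,k} ∂^n ψ^{+,k}:), satisfying the symmetry Ψ^{m,n} = -Ψ^{n,m} and the Leibniz recursion ∂Ψ^{m,n} = Ψ^{m+1,n} + Ψ^{m,n+1}. Abstractly: let V be a ℂ-vector space with elements Ψ^{m,n} (m,n ∈ ℤ≥0) satisfying Ψ^{m,n} = -Ψ^{n,m} and a derivation ∂ with ∂Ψ^{m,n} = Ψ^{m+1,n} + Ψ^{m,n+1}, and set W^j = Ψ^{j,0} for odd j. Then for all m,n, Ψ^{m,n} lies in the span of ∂^i W^{m+n-i} for 0 ≤ i ≤ m+n with i ≡ m+n-1 (mod 2). -/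
import Mathlib

section PsiAux

variable {V : Type*} [AddCommGroup V] [Module ℂ V]

/-- The span of the derivatives `d^i (Ψ (s-i) 0)` with `i ≤ s` and `i + s` odd. -/
def psiAuxS (d : V →ₗ[ℂ] V) (Ψ : ℕ → ℕ → V) (s : ℕ) : Submodule ℂ V :=
  Submodule.span ℂ {v : V | ∃ i : ℕ, i ≤ s ∧ Odd (i + s) ∧ v = (d ^ i) (Ψ (s - i) 0)}

lemma psiAuxS_map (d : V →ₗ[ℂ] V) (Ψ : ℕ → ℕ → V) (t : ℕ) {x : V}
    (hx : x ∈ psiAuxS d Ψ t) : d x ∈ psiAuxS d Ψ (t + 1) := by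
  induction hx using Submodule.span_induction with
  | mem v hv =>
    obtain ⟨i, hi, hodd, rfl⟩ := hv
    apply Submodule.subset_span
    refine ⟨i + 1, by omega, ?_, ?_⟩
    · rw [Nat.odd_iff] at hodd ⊢; omega
    · have h1 : t + 1 - (i + 1) = t - i := by omega
      rw [h1, pow_succ', Module.End.mul_apply]
  | zero => simp
  | add x y _ _ hx hy => rw [map_add]; exact add_mem hx hy
  | smul c x _ hx => rw [map_smul]; exact Submodule.smul_mem _ _ hx

lemma psi_main (d : V →ₗ[ℂ] V) (Ψ : ℕ → ℕ → V)
    (hanti : ∀ m n : ℕ, Ψ m n = -Ψ n m)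
    (hder : ∀ m n : ℕ, d (Ψ m n) = Ψ (m + 1) n + Ψ m (n + 1)) :
    ∀ s m n : ℕ, m + n = s → Ψ m n ∈ psiAuxS d Ψ s := by
  have hdiag : ∀ n : ℕ, Ψ n n = 0 := by
    intro n
    have h := hanti n n
    have h2 : (2 : ℂ) • Ψ n n = 0 := by
      rw [two_smul]; nth_rewrite 1 [h]; exact neg_add_cancel _
    exact (smul_eq_zero.mp h2).resolve_left two_ne_zero
  intro s
  induction s using Nat.strong_induction_on with
  | _ s ih =>
  rcases Nat.even_or_odd s with hs | hs
  · -- s even: reduce to the diagonal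
    have key : ∀ k : ℕ, ∀ m n : ℕ, m = n + k → m + n = s → Ψ m n ∈ psiAuxS d Ψ s := by
      intro k
      induction k using Nat.strong_induction_on with
      | _ k ihk =>
      intro m n hk hs'
      rcases Nat.lt_or_ge k 2 with h2 | h2
      · interval_cases k
        · have hmn : m = n := by omega
          subst hmn
          rw [hdiag m]; exact zero_mem _
        · exfalso; rcases hs with ⟨t, ht⟩; omega
      · have h1 : Ψ m n = d (Ψ (m - 1) n) - Ψ (m - 1) (n + 1) := by
          have hd := hder (m - 1) n
          have hm : m - 1 + 1 = m := by omega
          rw [hm] at hd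
          rw [hd]; abel
        rw [h1]
        apply sub_mem
        · have hmem : Ψ (m - 1) n ∈ psiAuxS d Ψ (m - 1 + n) :=
            ih (m - 1 + n) (by omega) _ _ rfl
          have := psiAuxS_map d Ψ _ hmem
          rwa [show m - 1 + n + 1 = s from by omega] at this
        · exact ihk (k - 2) (by omega) (m - 1) (n + 1) (by omega) (by omega)
    intro m n hmn
    rcases le_or_gt n m with h | h
    · exact key (m - n) m n (by omega) hmn
    · rw [hanti m n]
      exact neg_mem (key (n - m) n m (by omega) (by omega))
  · -- s odd: reduce to `Ψ s 0`, which is a generator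
    have key : ∀ n : ℕ, ∀ m : ℕ, m + n = s → Ψ m n ∈ psiAuxS d Ψ s := by
      intro n
      induction n with
      | zero =>
        intro m hm
        have hm' : m = s := by omega
        subst hm'
        apply Submodule.subset_span
        exact ⟨0, Nat.zero_le _, by simpa using hs, by simp⟩
      | succ n ihn =>
        intro m hm
        have h1 : Ψ m (n + 1) = d (Ψ m n) - Ψ (m + 1) n := by
          rw [hder m n]; abel
        rw [h1]
        apply sub_mem
        · have hmem : Ψ m n ∈ psiAuxS d Ψ (m + n) := ih (m + n) (by omega) _ _ rfl
          have := psiAuxS_map d Ψ _ hmem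
          rwa [show m + n + 1 = s from by omega] at this
        · exact ihn (m + 1) (by omega)
    intro m n hmn
    exact key n m hmn

end PsiAux

/-- let `V` be a ℂ-vector space with elements `Ψ^{m,n}` satisfying the
antisymmetry `Ψ^{m,n} = -Ψ^{n,m}` and the Leibniz recursion
`∂ Ψ^{m,n} = Ψ^{m+1,n} + Ψ^{m,n+1}` for a linear map `∂`, and set `W^j = Ψ^{j,0}`
(relevant for `j` odd).  Then each `Ψ^{m,n}` lies in the span of the elements
`∂^i W^{m+n-i}` for `0 ≤ i ≤ m+n` with `i ≡ m+n-1 (mod 2)`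
(i.e. `i + m + n` odd, so that `m+n-i` is odd). -/
theorem Psi_in_span_of_derivatives_of_W
    (V : Type*) [AddCommGroup V] [Module ℂ V]
    (d : V →ₗ[ℂ] V) (Ψ : ℕ → ℕ → V)
    (hanti : ∀ m n : ℕ, Ψ m n = -Ψ n m)
    (hder : ∀ m n : ℕ, d (Ψ m n) = Ψ (m + 1) n + Ψ m (n + 1)) :
    ∀ m n : ℕ, Ψ m n ∈ Submodule.span ℂ
      {v : V | ∃ i : ℕ, i ≤ m + n ∧ Odd (i + m + n) ∧
        v = (d ^ i) (Ψ (m + n - i) 0)} := by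
  intro m n
  have h := psi_main d Ψ hanti hder (m + n) m n rfl
  have hset : {v : V | ∃ i : ℕ, i ≤ m + n ∧ Odd (i + m + n) ∧
      v = (d ^ i) (Ψ (m + n - i) 0)} =
      {v : V | ∃ i : ℕ, i ≤ m + n ∧ Odd (i + (m + n)) ∧
      v = (d ^ i) (Ψ (m + n - i) 0)} := by
    ext v; simp [add_assoc]
  rw [hset]
  exact h
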